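/- Let A be a unital C*-algebra, let u ∈ A be a unitary, let 0 ≤ ε ≤ 1/10, and let a ∈ A satisfy ‖a − u‖ ≤ ε. Then a is invertible, a*·a is a positive invertible element with ‖a*·a − 1‖ ≤ 2ε + ε², and the element b := a·(a*·a)^{−1/2} (the inverse square root taken by continuous functional calculus) is a unitary with ‖b − u‖ ≤ 3ε. -/

import Mathlib

set_option maxHeartbeats 1000000

open scoped NNReal

/-- An element within `ε ≤ 1/10` of a unitary is invertible, `a*a` is positive
invertible with `‖a*a - 1‖ ≤ 2ε + ε²`, and the unitary polar part `a·(a*a)^{-1/2}` is a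
unitary within `3ε` of the original unitary. -/
theorem polar_part_close_to_unitary {A : Type*} [CStarAlgebra A]
    [PartialOrder A] [StarOrderedRing A]
    (u : A) (hu : u ∈ unitary A) (ε : ℝ) (hε0 : 0 ≤ ε) (hε : ε ≤ 1 / 10)
    (a : A) (ha : ‖a - u‖ ≤ ε) :
    IsUnit a ∧ 0 ≤ star a * a ∧ IsUnit (star a * a) ∧
      ‖star a * a - 1‖ ≤ 2 * ε + ε ^ 2 ∧
      a * CFC.rpow (star a * a) (-(1 / 2) : ℝ) ∈ unitary A ∧
      ‖a * CFC.rpow (star a * a) (-(1 / 2) : ℝ) - u‖ ≤ 3 * ε := by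
  obtain hA | hA := subsingleton_or_nontrivial A
  · refine ⟨isUnit_of_subsingleton a, star_mul_self_nonneg a,
      isUnit_of_subsingleton _, ?_, ?_, ?_⟩
    · rw [Subsingleton.elim (star a * a - 1) 0, norm_zero]; positivity
    · have hx : a * CFC.rpow (star a * a) (-(1 / 2) : ℝ) = 1 := Subsingleton.elim _ _
      rw [hx]; exact one_mem _
    · have hx : a * CFC.rpow (star a * a) (-(1 / 2) : ℝ) - u = 0 := Subsingleton.elim _ _
      rw [hx, norm_zero]; positivity
  have hu1 : star u * u = 1 := (Unitary.mem_iff.mp hu).1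
  have hu2 : u * star u = 1 := (Unitary.mem_iff.mp hu).2
  have hnu : ‖u‖ ≤ 1 := by
    have h := CStarRing.norm_star_mul_self (x := u)
    rw [hu1, norm_one] at h
    nlinarith [norm_nonneg u]
  set c := star a * a with hc
  have hc0 : (0 : A) ≤ c := star_mul_self_nonneg a
  have hua : IsUnit u := ⟨⟨u, star u, hu2, hu1⟩, rfl⟩
  have hsu : ‖star u‖ ≤ 1 := by rwa [norm_star]
  have hsa : ‖(1 : A) - star u * a‖ < 1 := by
    have h1 : (1 : A) - star u * a = star u * (u - a) := by rw [mul_sub, hu1]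
    rw [h1]
    calc ‖star u * (u - a)‖ ≤ ‖star u‖ * ‖u - a‖ := norm_mul_le _ _
      _ ≤ 1 * ε := by
          rw [norm_sub_rev]
          exact mul_le_mul hsu ha (norm_nonneg _) zero_le_one
      _ < 1 := by linarith
  have hunit_ua : IsUnit (star u * a) :=
    sub_sub_self 1 (star u * a) ▸ (Units.oneSub (1 - star u * a) hsa).isUnit
  have hA_a : IsUnit a := by
    have h2 : a = u * (star u * a) := by rw [← mul_assoc, hu2, one_mul]
    rw [h2]; exact hua.mul hunit_ua
  have hc_unit : IsUnit c := hA_a.star.mul hA_a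
  have hna : ‖a‖ ≤ 1 + ε := by
    calc ‖a‖ = ‖u + (a - u)‖ := by rw [add_sub_cancel]
      _ ≤ ‖u‖ + ‖a - u‖ := norm_add_le _ _
      _ ≤ 1 + ε := add_le_add hnu ha
  have hδ : ‖c - 1‖ ≤ 2 * ε + ε ^ 2 := by
    have hrw : c - 1 = star (a - u) * a + star u * (a - u) := by
      rw [star_sub, sub_mul, mul_sub, hu1, hc]; abel
    calc ‖c - 1‖ ≤ ‖star (a - u) * a‖ + ‖star u * (a - u)‖ := hrw ▸ norm_add_le _ _
      _ ≤ ε * (1 + ε) + 1 * ε := by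
          refine add_le_add ?_ ?_
          · refine le_trans (norm_mul_le _ _) ?_
            rw [norm_star]
            exact mul_le_mul ha hna (norm_nonneg _) hε0
          · exact le_trans (norm_mul_le _ _)
              (mul_le_mul hsu ha (norm_nonneg _) zero_le_one)
      _ = 2 * ε + ε ^ 2 := by ring
  set δ : ℝ := 2 * ε + ε ^ 2 with hδdef
  have hδ1 : δ < 1 := by nlinarith
  have hδ0 : 0 ≤ δ := by positivity
  have hspec : ∀ x ∈ spectrum ℝ c, 1 - δ ≤ x ∧ x ≤ 1 + δ := by
    intro x hx
    have hx1 : x - 1 ∈ spectrum ℝ (c - algebraMap ℝ A 1) := by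
      rw [← spectrum.sub_singleton_eq]
      exact Set.sub_mem_sub hx rfl
    rw [map_one] at hx1
    have h3 : ‖x - 1‖ ≤ ‖c - 1‖ := spectrum.norm_le_norm_of_mem hx1
    rw [Real.norm_eq_abs] at h3
    have h4 : |x - 1| ≤ δ := le_trans h3 hδ
    rw [abs_le] at h4
    constructor <;> linarith [h4.1, h4.2]
  have hspos : ∀ x ∈ spectrum ℝ c, 0 < x := fun x hx => by
    have := (hspec x hx).1; linarith
  have hcont : ContinuousOn (fun x : ℝ => x ^ (-(1 / 2) : ℝ)) (spectrum ℝ c) := fun x hx =>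
    (Real.continuousAt_rpow_const x _ (Or.inl (hspos x hx).ne')).continuousWithinAt
  set r := cfc (fun x : ℝ => x ^ (-(1 / 2) : ℝ)) c with hrdef
  have hr_eq : CFC.rpow c (-(1 / 2) : ℝ) = r := by
    have h0 : CFC.rpow c (-(1 / 2) : ℝ)
        = cfc (fun x : ℝ≥0 => x ^ (-(1 / 2) : ℝ)) c := rfl
    rw [h0, cfc_nnreal_eq_real _ _ hc0]
    exact cfc_congr fun x hx => by
      rw [NNReal.coe_rpow, Real.coe_toNNReal x (hspos x hx).le]
  -- unitarity
  have h0spec : (0 : ℝ≥0) ∉ spectrum ℝ≥0 c := spectrum.zero_notMem ℝ≥0 hc_unit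
  have hsb1 : c ^ (-(1 / 2) : ℝ) * c * c ^ (-(1 / 2) : ℝ) = 1 := by
    calc c ^ (-(1 / 2) : ℝ) * c * c ^ (-(1 / 2) : ℝ)
        = c ^ (-(1 / 2) : ℝ) * c ^ (1 : ℝ) * c ^ (-(1 / 2) : ℝ) := by
          rw [CFC.rpow_one c hc0]
      _ = c ^ ((-(1 / 2)) + 1 : ℝ) * c ^ (-(1 / 2) : ℝ) := by
          rw [CFC.rpow_add hc_unit]
      _ = c ^ ((1 / 2) : ℝ) * c ^ (-(1 / 2) : ℝ) := by norm_num
      _ = 1 := CFC.rpow_mul_rpow_neg (1 / 2) (hc_unit.isStrictlyPositive hc0)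
  have hrsa : star (c ^ (-(1 / 2) : ℝ)) = c ^ (-(1 / 2) : ℝ) :=
    (IsSelfAdjoint.of_nonneg CFC.rpow_nonneg)
  have hbb : star (a * c ^ (-(1 / 2) : ℝ)) * (a * c ^ (-(1 / 2) : ℝ)) = 1 := by
    rw [star_mul, hrsa]
    calc c ^ (-(1 / 2) : ℝ) * star a * (a * c ^ (-(1 / 2) : ℝ))
        = c ^ (-(1 / 2) : ℝ) * (star a * a) * c ^ (-(1 / 2) : ℝ) := by
          noncomm_ring
      _ = 1 := by rw [← hc]; exact hsb1
  have hr_unit : IsUnit (c ^ (-(1 / 2) : ℝ)) :=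
    ⟨⟨c ^ (-(1 / 2) : ℝ), c ^ ((1 / 2) : ℝ),
      CFC.rpow_neg_mul_rpow (1 / 2) (hc_unit.isStrictlyPositive hc0),
      CFC.rpow_mul_rpow_neg (1 / 2) (hc_unit.isStrictlyPositive hc0)⟩, rfl⟩
  have hbu : IsUnit (a * c ^ (-(1 / 2) : ℝ)) := hA_a.mul hr_unit
  have hmem : a * c ^ (-(1 / 2) : ℝ) ∈ unitary A := by
    rw [Unitary.mem_iff]
    refine ⟨hbb, ?_⟩
    obtain ⟨v, hv⟩ := hbu
    have h1 : star (a * c ^ (-(1 / 2) : ℝ)) = ↑v⁻¹ :=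
      Units.eq_inv_of_mul_eq_one_right (by rw [hv]; exact hbb)
    rw [h1, ← hv]
    exact v.mul_inv
  -- norm estimates
  set K : ℝ := (1 + 3 * ε) / (1 + ε) with hKdef
  have hεpos : (0 : ℝ) < 1 + ε := by linarith
  have hKε : K * (1 + ε) = 1 + 3 * ε := div_mul_cancel₀ _ hεpos.ne'
  have hK1 : 1 ≤ K := by rw [hKdef, le_div_iff₀ hεpos]; linarith
  have hK2 : K ≤ 2 := by rw [hKdef, div_le_iff₀ hεpos]; linarith
  have hKpos : 0 < K := lt_of_lt_of_le one_pos hK1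
  have hKK : 1 ≤ K ^ 2 * (1 - δ) := by
    rw [← mul_le_mul_iff_of_pos_right (pow_pos hεpos 2)]
    have e1 : K ^ 2 * (1 + ε) ^ 2 = (1 + 3 * ε) ^ 2 := by
      rw [← mul_pow, hKε]
    nlinarith [mul_nonneg hε0 hε0, mul_nonneg (mul_nonneg hε0 hε0) hε0,
      mul_nonneg hε0 (sub_nonneg.2 hε), mul_nonneg (mul_nonneg hε0 hε0) (sub_nonneg.2 hε),
      mul_nonneg (mul_nonneg (mul_nonneg hε0 hε0) hε0) (sub_nonneg.2 hε)]
  have key : ∀ x ∈ spectrum ℝ c,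
      x ^ (-(1 / 2) : ℝ) ≤ K ∧ |x ^ (-(1 / 2) : ℝ) - 1| ≤ K - 1 := by
    intro x hx
    obtain ⟨hxl, hxr⟩ := hspec x hx
    have hx0 : 0 < x := hspos x hx
    set s : ℝ := Real.sqrt x with hsdef
    have hs0 : 0 < s := Real.sqrt_pos.2 hx0
    have hs2 : s ^ 2 = x := Real.sq_sqrt hx0.le
    have hfx : x ^ (-(1 / 2) : ℝ) = s⁻¹ := by
      rw [Real.rpow_neg hx0.le, hsdef, Real.sqrt_eq_rpow]
    have hKs : 1 ≤ K * s := by nlinarith [mul_pos hKpos hs0]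
    have hb1 : s⁻¹ ≤ K := by
      calc s⁻¹ ≤ s⁻¹ * (K * s) := le_mul_of_one_le_right (by positivity) hKs
        _ = K := by field_simp
    have hs_le : s ≤ 1 + ε := by nlinarith
    have hKs2 : (2 - K) * s ≤ 1 := by
      nlinarith [mul_nonneg (sub_nonneg.2 hK2) (sub_nonneg.2 hs_le)]
    have hb2 : 2 - K ≤ s⁻¹ := by
      have hsi : s * s⁻¹ = 1 := mul_inv_cancel₀ hs0.ne'
      nlinarith [inv_nonneg.2 hs0.le]
    rw [hfx]
    exact ⟨hb1, abs_le.2 ⟨by linarith, by linarith⟩⟩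
  have hnr : ‖r‖ ≤ K := by
    refine norm_cfc_le hKpos.le fun x hx => ?_
    rw [Real.norm_eq_abs, abs_of_nonneg (Real.rpow_nonneg (hspos x hx).le _)]
    exact (key x hx).1
  have hnr1 : ‖r - 1‖ ≤ K - 1 := by
    have hsub : r - 1 = cfc (fun x : ℝ => x ^ (-(1 / 2) : ℝ) - 1) c := by
      rw [cfc_sub _ _ c hcont continuousOn_const, cfc_const_one ℝ c]
    rw [hsub]
    refine norm_cfc_le (by linarith) fun x hx => ?_
    rw [Real.norm_eq_abs]
    exact (key x hx).2
  refine ⟨hA_a, hc0, hc_unit, hδ, hmem, ?_⟩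
  rw [hr_eq]
  have hdecomp : a * r - u = (a - u) * r + u * (r - 1) := by noncomm_ring
  calc ‖a * r - u‖ ≤ ‖(a - u) * r‖ + ‖u * (r - 1)‖ := hdecomp ▸ norm_add_le _ _
    _ ≤ ε * K + 1 * (K - 1) := add_le_add
        (le_trans (norm_mul_le _ _) (mul_le_mul ha hnr (norm_nonneg _) hε0))
        (le_trans (norm_mul_le _ _) (mul_le_mul hnu hnr1 (norm_nonneg _) zero_le_one))
    _ ≤ 3 * ε := by nlinarith [hKε]
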